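/- Let y1 > y0 and x1 > 0. The function g(θ) = √((y1−y0)² + (2x1 − (y1−y0)/tan θ)²) − (y1−y0)/sin θ is monotonically increasing on the interval [arctan((y1−y0)/(2x1)), π). -/

import Mathlib

open Real

private lemma f_mono_aux {s t : ℝ} (h : s ≤ t) :
    s * Real.sqrt (1 + t ^ 2) ≤ t * Real.sqrt (1 + s ^ 2) := by
  rcases le_or_gt 0 s with hs | hs
  · have ht : 0 ≤ t := hs.trans h
    have h1 : s * Real.sqrt (1 + t ^ 2) = Real.sqrt (s ^ 2 * (1 + t ^ 2)) := by
      rw [Real.sqrt_mul (by positivity), Real.sqrt_sq hs]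
    have h2 : t * Real.sqrt (1 + s ^ 2) = Real.sqrt (t ^ 2 * (1 + s ^ 2)) := by
      rw [Real.sqrt_mul (by positivity), Real.sqrt_sq ht]
    rw [h1, h2]
    apply Real.sqrt_le_sqrt
    nlinarith
  · rcases le_or_gt 0 t with ht | ht
    · calc s * Real.sqrt (1 + t ^ 2) ≤ 0 :=
            mul_nonpos_of_nonpos_of_nonneg hs.le (Real.sqrt_nonneg _)
        _ ≤ t * Real.sqrt (1 + s ^ 2) := mul_nonneg ht (Real.sqrt_nonneg _)
    · have h1 : s * Real.sqrt (1 + t ^ 2) = -Real.sqrt (s ^ 2 * (1 + t ^ 2)) := by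
        rw [Real.sqrt_mul (by positivity), Real.sqrt_sq_eq_abs, abs_of_neg hs]; ring
      have h2 : t * Real.sqrt (1 + s ^ 2) = -Real.sqrt (t ^ 2 * (1 + s ^ 2)) := by
        rw [Real.sqrt_mul (by positivity), Real.sqrt_sq_eq_abs, abs_of_neg ht]; ring
      rw [h1, h2, neg_le_neg_iff]
      apply Real.sqrt_le_sqrt
      nlinarith

private lemma phi_anti {κ : ℝ} (hκ : 0 ≤ κ) :
    AntitoneOn (fun u : ℝ => Real.sqrt (1 + (κ - u) ^ 2) - Real.sqrt (1 + u ^ 2))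
      (Set.Iic κ) := by
  have key : ∀ x : ℝ, HasDerivAt
      (fun u : ℝ => Real.sqrt (1 + (κ - u) ^ 2) - Real.sqrt (1 + u ^ 2))
      ((x - κ) / Real.sqrt (1 + (κ - x) ^ 2) - x / Real.sqrt (1 + x ^ 2)) x := by
    intro x
    have hA : (0:ℝ) < Real.sqrt (1 + (κ - x) ^ 2) := Real.sqrt_pos.2 (by positivity)
    have hB : (0:ℝ) < Real.sqrt (1 + x ^ 2) := Real.sqrt_pos.2 (by positivity)
    have d1 : HasDerivAt (fun u : ℝ => 1 + (κ - u) ^ 2) (2 * (κ - x) ^ 1 * (-1)) x := by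
      exact ((((hasDerivAt_id x).const_sub κ)).pow 2).const_add 1
    have d2 : HasDerivAt (fun u : ℝ => 1 + u ^ 2) (2 * x ^ 1 * 1) x := by
      exact ((hasDerivAt_id x).pow 2).const_add 1
    have s1 := d1.sqrt (by positivity)
    have s2 := d2.sqrt (by positivity)
    have := s1.sub s2
    refine this.congr_deriv ?_
    ring
  apply antitoneOn_of_deriv_nonpos (convex_Iic κ)
  · exact Continuous.continuousOn (by fun_prop)
  · intro x _
    exact (key x).differentiableAt.differentiableWithinAt
  · intro x hx
    rw [(key x).deriv]
    rw [interior_Iic, Set.mem_Iio] at hx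
    have hA : (0:ℝ) < Real.sqrt (1 + (κ - x) ^ 2) := Real.sqrt_pos.2 (by positivity)
    have hB : (0:ℝ) < Real.sqrt (1 + x ^ 2) := Real.sqrt_pos.2 (by positivity)
    rw [sub_nonpos, div_le_div_iff₀ hA hB]
    have hsq : (κ - x) ^ 2 = (x - κ) ^ 2 := by ring
    rw [hsq]
    exact f_mono_aux (by linarith : x - κ ≤ x)

private lemma cot_anti {a b : ℝ} (ha : 0 < a) (hb : b < π) (hab : a ≤ b) :
    Real.cos b / Real.sin b ≤ Real.cos a / Real.sin a := by
  have hsa : 0 < Real.sin a := Real.sin_pos_of_pos_of_lt_pi ha (lt_of_le_of_lt hab hb)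
  have hsb : 0 < Real.sin b := Real.sin_pos_of_pos_of_lt_pi (lt_of_lt_of_le ha hab) hb
  rw [div_le_div_iff₀ hsb hsa]
  have h1 : 0 ≤ Real.sin (b - a) :=
    Real.sin_nonneg_of_nonneg_of_le_pi (by linarith) (by linarith)
  rw [Real.sin_sub] at h1
  nlinarith

theorem path_difference_monotone (y0 y1 x1 : ℝ) (hy : y0 < y1) (hx1 : 0 < x1) :
    MonotoneOn
      (fun θ : ℝ =>
        Real.sqrt ((y1 - y0) ^ 2 + (2 * x1 - (y1 - y0) / Real.tan θ) ^ 2)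
          - (y1 - y0) / Real.sin θ)
      (Set.Ico (Real.arctan ((y1 - y0) / (2 * x1))) π) := by
  intro θ₁ h₁ θ₂ h₂ hle
  dsimp only
  set d := y1 - y0 with hdd
  have hdpos : 0 < d := by simp [hdd]; linarith
  have hapos : 0 < 2 * x1 := by linarith
  set κ := 2 * x1 / d with hκ
  have hκpos : 0 < κ := div_pos hapos hdpos
  have hθ0pos : 0 < Real.arctan (d / (2 * x1)) := by
    rw [← Real.arctan_zero]
    exact Real.arctan_strictMono (div_pos hdpos hapos)
  -- basic facts about each point
  have hθ₁pos : 0 < θ₁ := lt_of_lt_of_le hθ0pos h₁.1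
  have hθ₂pos : 0 < θ₂ := lt_of_lt_of_le hθ0pos h₂.1
  have hs₁ : 0 < Real.sin θ₁ := Real.sin_pos_of_pos_of_lt_pi hθ₁pos h₁.2
  have hs₂ : 0 < Real.sin θ₂ := Real.sin_pos_of_pos_of_lt_pi hθ₂pos h₂.2
  -- rewriting lemma
  have hrw : ∀ θ : ℝ, 0 < Real.sin θ →
      Real.sqrt (d ^ 2 + (2 * x1 - d / Real.tan θ) ^ 2) - d / Real.sin θ
        = d * (Real.sqrt (1 + (κ - Real.cos θ / Real.sin θ) ^ 2)
            - Real.sqrt (1 + (Real.cos θ / Real.sin θ) ^ 2)) := by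
    intro θ hs
    have hsne : Real.sin θ ≠ 0 := ne_of_gt hs
    have hpy : Real.sin θ ^ 2 + Real.cos θ ^ 2 = 1 := Real.sin_sq_add_cos_sq θ
    have h1 : d / Real.tan θ = d * (Real.cos θ / Real.sin θ) := by
      rw [Real.tan_eq_sin_div_cos, div_div_eq_mul_div, mul_div_assoc]
    have h2 : d ^ 2 + (2 * x1 - d / Real.tan θ) ^ 2
        = d ^ 2 * (1 + (κ - Real.cos θ / Real.sin θ) ^ 2) := by
      rw [h1, hκ]
      field_simp
    have h3 : Real.sqrt (1 + (Real.cos θ / Real.sin θ) ^ 2) = 1 / Real.sin θ := by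
      have : 1 + (Real.cos θ / Real.sin θ) ^ 2 = (1 / Real.sin θ) ^ 2 := by
        field_simp
        exact hpy
      rw [this, Real.sqrt_sq (by positivity)]
    rw [h2, Real.sqrt_mul (by positivity), Real.sqrt_sq hdpos.le, mul_sub, h3]
    ring
  rw [hrw θ₁ hs₁, hrw θ₂ hs₂]
  -- cot values
  set u₁ := Real.cos θ₁ / Real.sin θ₁ with hu₁
  set u₂ := Real.cos θ₂ / Real.sin θ₂ with hu₂
  have hu21 : u₂ ≤ u₁ := cot_anti hθ₁pos h₂.2 hle
  -- cot at arctan point equals κ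
  have hκcot : Real.cos (Real.arctan (d / (2 * x1))) / Real.sin (Real.arctan (d / (2 * x1))) = κ := by
    set θ₀ := Real.arctan (d / (2 * x1)) with hθ₀
    have htan : Real.tan θ₀ = d / (2 * x1) := Real.tan_arctan _
    have hc₀ : 0 < Real.cos θ₀ := Real.cos_arctan_pos _
    have hs₀ : 0 < Real.sin θ₀ := Real.sin_pos_of_pos_of_lt_pi hθ0pos
      (lt_trans (Real.arctan_lt_pi_div_two _) (by linarith [Real.pi_pos]))
    rw [Real.tan_eq_sin_div_cos] at htan
    rw [hκ, div_eq_div_iff hs₀.ne' hdpos.ne']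
    rw [div_eq_div_iff hc₀.ne' (ne_of_gt hapos)] at htan
    linarith
  have hu₁κ : u₁ ≤ κ := by
    rw [← hκcot]
    exact cot_anti hθ0pos h₁.2 h₁.1
  have hu₂κ : u₂ ≤ κ := le_trans hu21 hu₁κ
  have := phi_anti hκpos.le (Set.mem_Iic.2 hu₂κ) (Set.mem_Iic.2 hu₁κ) hu21
  exact mul_le_mul_of_nonneg_left this hdpos.le
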